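/- Let d ≥ 2 and n ≥ 0, and let r_n^d = binom(n+d−1, n). There exist points ξ_1, …, ξ_{r_n^d} ∈ S^{d-1} such that for every real polynomial f in d variables of total degree at most n, there exist real univariate polynomials p_1, …, p_{r_n^d} with f(x) = Σ_{j=1}^{r_n^d} p_j(⟨x, ξ_j⟩) for all x ∈ ℝ^d. -/

import Mathlib

open MvPolynomial Metric

set_option synthInstance.maxHeartbeats 1000000
set_option maxHeartbeats 2000000
set_option linter.dupNamespace false

namespace RidgeAux


variable {d : ℕ}

/-- Evaluation of multivariate polynomials as a linear map. -/
noncomputable def evalLM (x : Fin d → ℝ) : MvPolynomial (Fin d) ℝ →ₗ[ℝ] ℝ where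
  toFun := eval x
  map_add' := by simp
  map_smul' := fun c p => by simp [MvPolynomial.smul_eval]

@[simp] lemma evalLM_apply (x : Fin d → ℝ) (p : MvPolynomial (Fin d) ℝ) :
    evalLM x p = eval x p := rfl

/-- Greedy choice of evaluation points separating a finite-dimensional space of
polynomials. -/
lemma exists_separating_points :
    ∀ (k : ℕ) (V : Submodule ℝ (MvPolynomial (Fin d) ℝ)) (_ : FiniteDimensional ℝ V)
      (_ : Module.finrank ℝ V ≤ k),
      ∃ ξ : Fin k → (Fin d → ℝ), ∀ q ∈ V, (∀ j, eval (ξ j) q = 0) → q = 0 := by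
  intro k
  induction k with
  | zero =>
    intro V hfd hV
    refine ⟨fun j => 0, fun q hq _ => ?_⟩
    have hsub : Subsingleton V := by
      rw [← Module.finrank_zero_iff (R := ℝ)]
      omega
    have : (⟨q, hq⟩ : V) = (0 : V) := Subsingleton.elim _ _
    simpa using congrArg Subtype.val this
  | succ k ih =>
    intro V hfd hV
    by_cases hbot : V = ⊥
    · refine ⟨fun j => 0, fun q hq _ => ?_⟩
      simpa [hbot] using hq
    · obtain ⟨q0, hq0V, hq0⟩ := Submodule.exists_mem_ne_zero_of_ne_bot hbot
      have : ∃ x0 : Fin d → ℝ, eval x0 q0 ≠ 0 := by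
        by_contra h
        push_neg at h
        exact hq0 (MvPolynomial.funext (fun x => by simpa using h x))
      obtain ⟨x0, hx0⟩ := this
      set V' : Submodule ℝ (MvPolynomial (Fin d) ℝ) := V ⊓ LinearMap.ker (evalLM x0) with hV'
      have hle : V' ≤ V := inf_le_left
      have hfd' : FiniteDimensional ℝ V' := Submodule.finiteDimensional_of_le hle
      have hlt : V' < V := by
        refine lt_of_le_of_ne hle (fun h => ?_)
        have : q0 ∈ V' := h ▸ hq0V
        exact hx0 (by simpa using this.2)
      have hrk : Module.finrank ℝ V' ≤ k := by
        have := Submodule.finrank_lt_finrank_of_lt (K := ℝ) hlt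
        omega
      obtain ⟨ξ', hξ'⟩ := ih V' hfd' hrk
      refine ⟨Fin.cons x0 ξ', fun q hq hvan => ?_⟩
      have hq' : q ∈ V' := by
        refine ⟨hq, ?_⟩
        simpa using hvan 0
      exact hξ' q hq' (fun j => by simpa [Fin.cons_succ] using hvan j.succ)



variable {d : ℕ}

/-- The linear form `∑ v_i X_i`. -/
noncomputable def ell (v : Fin d → ℝ) : MvPolynomial (Fin d) ℝ := ∑ i, C (v i) * X i

lemma eval_ell (x v : Fin d → ℝ) : eval x (ell v) = ∑ i, v i * x i := by
  simp [ell]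

/-- `∏ i, X i ^ k i` as a monomial. -/
lemma prod_X_pow_eq (k : Fin d → ℕ) :
    (∏ i, (X i : MvPolynomial (Fin d) ℝ) ^ k i)
      = monomial (Finsupp.equivFunOnFinite.symm k) 1 := by
  classical
  rw [← MvPolynomial.prod_X_pow_eq_monomial]
  exact (Finset.prod_subset (Finset.subset_univ _) (fun i _ hi => by
    have h0 : k i = 0 := Finsupp.notMem_support_iff.mp hi
    rw [h0, pow_zero])).symm

lemma ell_pow_mem (m : ℕ) (v : Fin d → ℝ) :
    (ell v) ^ m ∈ homogeneousSubmodule (Fin d) ℝ m := by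
  rw [mem_homogeneousSubmodule]
  have h1 : (ell v).IsHomogeneous 1 := by
    apply MvPolynomial.IsHomogeneous.sum
    intro i _
    exact isHomogeneous_C_mul_X _ _
  simpa using h1.pow m





variable {d : ℕ}

noncomputable instance fintypeT (n : ℕ) : Fintype {P : Fin d → ℕ // ∑ i, P i = n} :=
  Fintype.ofEquiv _ (Sym.equivNatSumOfFintype (Fin d) n)

noncomputable def Mon (n : ℕ) (P : {P : Fin d → ℕ // ∑ i, P i = n}) :
    MvPolynomial (Fin d) ℝ :=
  monomial (Finsupp.equivFunOnFinite.symm P.1) (1 : ℝ)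

lemma sum_univ_of_isHomogeneous {f : MvPolynomial (Fin d) ℝ} {n : ℕ}
    (hf : f.IsHomogeneous n) {α : Fin d →₀ ℕ} (hα : α ∈ f.support) :
    ∑ i, α i = n := by
  have hco : coeff α f ≠ 0 := MvPolynomial.mem_support_iff.mp hα
  have hdeg : α.degree = n := by rw [Finsupp.degree_eq_weight_one]; exact hf hco
  rw [← hdeg, Finsupp.degree]
  exact (Finset.sum_subset (Finset.subset_univ _)
    (fun i _ hi => Finsupp.notMem_support_iff.mp hi)).symm

lemma H_le_span (n : ℕ) :
    homogeneousSubmodule (Fin d) ℝ n ≤ Submodule.span ℝ (Set.range (Mon (d := d) n)) := by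
  intro f hf
  rw [mem_homogeneousSubmodule] at hf
  nth_rw 1 [f.as_sum]
  refine Submodule.sum_mem _ (fun α hα => ?_)
  have h1 : monomial α (coeff α f) = (coeff α f) • monomial α (1 : ℝ) := by
    rw [MvPolynomial.smul_monomial, smul_eq_mul, mul_one]
  rw [h1]
  refine Submodule.smul_mem _ _ (Submodule.subset_span ?_)
  exact ⟨⟨Finsupp.equivFunOnFinite α, by
    simpa using sum_univ_of_isHomogeneous hf hα⟩, by simp [Mon]⟩

instance finiteDimensional_H (n : ℕ) :
    FiniteDimensional ℝ (homogeneousSubmodule (Fin d) ℝ n) :=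
  haveI : FiniteDimensional ℝ (Submodule.span ℝ (Set.range (Mon (d := d) n))) :=
    FiniteDimensional.span_of_finite ℝ (Set.finite_range _)
  Submodule.finiteDimensional_of_le (H_le_span n)

lemma finrank_H_le (n : ℕ) :
    Module.finrank ℝ (homogeneousSubmodule (Fin d) ℝ n) ≤ (n + d - 1).choose n := by
  classical
  haveI : FiniteDimensional ℝ (Submodule.span ℝ (Set.range (Mon (d := d) n))) :=
    FiniteDimensional.span_of_finite ℝ (Set.finite_range _)
  have h1 : Module.finrank ℝ (homogeneousSubmodule (Fin d) ℝ n)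
      ≤ Module.finrank ℝ (Submodule.span ℝ (Set.range (Mon (d := d) n))) :=
    Submodule.finrank_mono (H_le_span n)
  have h2 := finrank_range_le_card (R := ℝ) (Mon (d := d) n)
  have h3 : Fintype.card {P : Fin d → ℕ // ∑ i, P i = n} = (d + n - 1).choose n := by
    rw [← Fintype.card_congr (Sym.equivNatSumOfFintype (Fin d) n)]
    simpa using Sym.card_sym_eq_choose (α := Fin d) n
  have h4 : (d + n - 1).choose n = (n + d - 1).choose n := by rw [Nat.add_comm]
  have h2' : Module.finrank ℝ (Submodule.span ℝ (Set.range (Mon (d := d) n)))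
      ≤ Fintype.card {P : Fin d → ℕ // ∑ i, P i = n} := h2
  exact h1.trans (h2'.trans (le_of_eq (h3.trans h4)))

lemma key (m : ℕ) {r : ℕ} (ξ : Fin r → (Fin d → ℝ))
    (hsep : ∀ q ∈ homogeneousSubmodule (Fin d) ℝ m, (∀ j, eval (ξ j) q = 0) → q = 0) :
    homogeneousSubmodule (Fin d) ℝ m ≤
      Submodule.span ℝ (Set.range fun j => (ell (ξ j)) ^ m) := by
  classical
  intro f hf
  by_contra hfW
  set W := Submodule.span ℝ (Set.range fun j => (ell (ξ j)) ^ m) with hW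
  have hπf : W.mkQ f ≠ 0 := by
    rw [Submodule.mkQ_apply, ne_eq, Submodule.Quotient.mk_eq_zero]
    exact hfW
  have hne : ¬ ∀ φ : Module.Dual ℝ (MvPolynomial (Fin d) ℝ ⧸ W), φ (W.mkQ f) = 0 := by
    rw [Module.forall_dual_apply_eq_zero_iff]
    exact hπf
  push_neg at hne
  obtain ⟨φ₀, hφ₀⟩ := hne
  set φ : MvPolynomial (Fin d) ℝ →ₗ[ℝ] ℝ := φ₀.comp W.mkQ with hφdef
  have hφW : ∀ w ∈ W, φ w = 0 := by
    intro w hw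
    have : W.mkQ w = 0 := by
      rw [Submodule.mkQ_apply, Submodule.Quotient.mk_eq_zero]
      exact hw
    simp [hφdef, this]
  set A := Finset.piAntidiag (Finset.univ : Finset (Fin d)) m with hA
  set M : (Fin d → ℕ) → MvPolynomial (Fin d) ℝ := fun k => ∏ i, X i ^ k i with hM
  set q : MvPolynomial (Fin d) ℝ :=
    ∑ k ∈ A, C ((Nat.multinomial Finset.univ k : ℝ) * φ (M k)) * M k with hq
  have hCsmul : ∀ (a : ℝ) (p : MvPolynomial (Fin d) ℝ), φ (C a * p) = a * φ p := by
    intro a p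
    rw [← MvPolynomial.smul_eq_C_mul, map_smul, smul_eq_mul]
  -- the main identity
  have hkey : ∀ v : Fin d → ℝ, eval v q = φ ((ell v) ^ m) := by
    intro v
    have hexp : (ell v) ^ m
        = ∑ k ∈ A, C ((Nat.multinomial Finset.univ k : ℝ) * ∏ i, (v i) ^ k i) * M k := by
      rw [ell, Finset.sum_pow_eq_sum_piAntidiag]
      refine Finset.sum_congr rfl (fun k hk => ?_)
      have : ∏ i, (C (v i) * X i) ^ k i
          = C (∏ i, (v i) ^ k i) * M k := by
        rw [hM]
        simp only [mul_pow]
        rw [Finset.prod_mul_distrib, map_prod]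
        simp [C_pow]
      rw [this, ← mul_assoc]
      congr 1
      rw [MvPolynomial.C_mul, map_natCast]
    rw [hexp, map_sum, map_sum]
    refine Finset.sum_congr rfl (fun k hk => ?_)
    rw [map_mul, eval_C, hCsmul]
    have : eval v (M k) = ∏ i, (v i) ^ k i := by
      simp only [hM]
      simp
    rw [this]
    ring
  -- q is homogeneous of degree m
  have hqH : q ∈ homogeneousSubmodule (Fin d) ℝ m := by
    rw [hq]
    refine Submodule.sum_mem _ (fun k hk => ?_)
    rw [hA, Finset.mem_piAntidiag] at hk
    rw [mem_homogeneousSubmodule]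
    have hMk : (M k).IsHomogeneous (∑ i, k i) := by
      rw [hM]
      exact MvPolynomial.IsHomogeneous.prod _ _ _
        (fun i _ => isHomogeneous_X_pow _ _)
    rw [hk.1] at hMk
    exact hMk.C_mul _
  -- q vanishes at all points
  have hqvan : ∀ j, eval (ξ j) q = 0 := by
    intro j
    rw [hkey]
    exact hφW _ (Submodule.subset_span ⟨j, rfl⟩)
  have hq0 : q = 0 := hsep q hqH hqvan
  -- coefficients of q vanish: φ (M k) = 0 for k ∈ A
  have hφM : ∀ k ∈ A, φ (M k) = 0 := by
    intro k0 hk0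
    have hc : coeff (Finsupp.equivFunOnFinite.symm k0) q
        = (Nat.multinomial Finset.univ k0 : ℝ) * φ (M k0) := by
      rw [hq, MvPolynomial.coeff_sum]
      rw [Finset.sum_eq_single k0]
      · rw [coeff_C_mul]
        simp only [hM]
        rw [prod_X_pow_eq, coeff_monomial, if_pos rfl, mul_one]
      · intro k hk hkk
        rw [coeff_C_mul]
        simp only [hM]
        rw [prod_X_pow_eq, coeff_monomial, if_neg, mul_zero]
        exact fun h => hkk (Finsupp.equivFunOnFinite.symm.injective h)
      · intro h
        exact absurd hk0 h
    rw [hq0, coeff_zero] at hc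
    have hmn : (Nat.multinomial Finset.univ k0 : ℝ) ≠ 0 := by
      exact_mod_cast (Nat.multinomial_pos _ _).ne'
    exact (mul_eq_zero.mp hc.symm).resolve_left hmn
  -- hence φ f = 0, contradiction
  have hφf : φ f = 0 := by
    have hsum : f = ∑ α ∈ f.support, monomial α (coeff α f) := f.as_sum
    rw [hsum, map_sum]
    refine Finset.sum_eq_zero (fun α hα => ?_)
    have h1 : monomial α (coeff α f) = C (coeff α f) * monomial α 1 := by
      rw [← MvPolynomial.smul_eq_C_mul, MvPolynomial.smul_monomial, smul_eq_mul, mul_one]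
    rw [h1, hCsmul]
    have hαA : (fun i => α i) ∈ A := by
      rw [hA, Finset.mem_piAntidiag]
      exact ⟨sum_univ_of_isHomogeneous hf hα, fun i _ => Finset.mem_univ i⟩
    have h2 : monomial α (1 : ℝ) = M (fun i => α i) := by
      simp only [hM]
      rw [prod_X_pow_eq, Finsupp.equivFunOnFinite_symm_coe]
    rw [h2, hφM _ hαA, mul_zero]
  exact hφ₀ (by simpa [hφdef] using hφf)


end RidgeAux

/-- There exist points `ξ_1, …, ξ_r` on the sphere (`r = C(n+d−1, n)`) such that every
polynomial of total degree at most `n` can be written as `Σ_j p_j(⟨x, ξ_j⟩)` for some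
univariate polynomials `p_j`. -/
theorem exists_ridge_decomposition (d n : ℕ) (hd : 2 ≤ d) :
    ∃ ξ : Fin ((n + d - 1).choose n) → sphere (0 : EuclideanSpace ℝ (Fin d)) 1,
      ∀ f : MvPolynomial (Fin d) ℝ, f.totalDegree ≤ n →
        ∃ p : Fin ((n + d - 1).choose n) → Polynomial ℝ,
          ∀ x : EuclideanSpace ℝ (Fin d),
            MvPolynomial.eval (fun i => x i) f =
              ∑ j, (p j).eval (∑ i, x i * (ξ j : EuclideanSpace ℝ (Fin d)) i) := by
  classical
  obtain ⟨ξ, hξ⟩ := RidgeAux.exists_separating_points ((n + d - 1).choose n)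
    (homogeneousSubmodule (Fin d) ℝ n) inferInstance (RidgeAux.finrank_H_le n)
  have hd0 : 0 < d := by omega
  set i0 : Fin d := ⟨0, hd0⟩ with hi0
  -- separation for all degrees up to n
  have hsep : ∀ m, m ≤ n → ∀ q ∈ homogeneousSubmodule (Fin d) ℝ m,
      (∀ j, eval (ξ j) q = 0) → q = 0 := by
    intro m hm q hq hvan
    have hX : ((X i0 : MvPolynomial (Fin d) ℝ) ^ (n - m)) ≠ 0 :=
      pow_ne_zero _ (MvPolynomial.X_ne_zero i0)
    have hq' : q * (X i0) ^ (n - m) ∈ homogeneousSubmodule (Fin d) ℝ n := by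
      rw [mem_homogeneousSubmodule] at hq ⊢
      have h2 := hq.mul (isHomogeneous_X_pow i0 (n - m))
      have h3 : m + (n - m) = n := by omega
      rwa [h3] at h2
    have hvan' : ∀ j, eval (ξ j) (q * X i0 ^ (n - m)) = 0 := fun j => by
      rw [map_mul, hvan j, zero_mul]
    rcases mul_eq_zero.mp (hξ _ hq' hvan') with h | h
    · exact h
    · exact absurd h hX
  have hspan : ∀ m, m ≤ n → homogeneousSubmodule (Fin d) ℝ m ≤
      Submodule.span ℝ (Set.range fun j => (RidgeAux.ell (ξ j)) ^ m) :=
    fun m hm => RidgeAux.key m ξ (hsep m hm)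
  -- unit vectors
  set Nrm : Fin ((n + d - 1).choose n) → ℝ :=
    fun j => ‖(WithLp.equiv 2 (Fin d → ℝ)).symm (ξ j)‖ with hNrm
  set u : Fin ((n + d - 1).choose n) → EuclideanSpace ℝ (Fin d) := fun j =>
    if h : ξ j = 0 then EuclideanSpace.single i0 (1 : ℝ)
    else (Nrm j)⁻¹ • (WithLp.equiv 2 (Fin d → ℝ)).symm (ξ j) with hu
  have hscale : ∀ j i, ξ j i = Nrm j * u j i := by
    intro j i
    by_cases h : ξ j = 0
    · have h0 : (WithLp.equiv 2 (Fin d → ℝ)).symm (ξ j) = 0 := by rw [h]; rfl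
      have hN : Nrm j = 0 := by rw [hNrm]; simp [h0]
      rw [hN, zero_mul, h]
      rfl
    · have hN : Nrm j ≠ 0 := by
        rw [hNrm]
        simp only [ne_eq, norm_eq_zero]
        intro h0
        exact h ((WithLp.equiv 2 (Fin d → ℝ)).symm.injective (h0.trans rfl))
      have huj : u j i = (Nrm j)⁻¹ * ξ j i := by
        rw [hu]
        simp only [h, dif_neg, not_false_iff]
        rfl
      rw [huj]
      field_simp
  have hunit : ∀ j, u j ∈ sphere (0 : EuclideanSpace ℝ (Fin d)) 1 := by
    intro j
    rw [mem_sphere_zero_iff_norm]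
    by_cases h : ξ j = 0
    · rw [hu]; simp [h]
    · rw [hu]
      simp only [h, dif_neg, not_false_iff]
      exact norm_smul_inv_norm (by intro h0; exact h ((WithLp.equiv 2 (Fin d → ℝ)).symm.injective (h0.trans rfl)))
  refine ⟨fun j => ⟨u j, hunit j⟩, ?_⟩
  intro f hf
  have hcomp : ∑ m ∈ Finset.range (n + 1), homogeneousComponent m f = f := by
    conv_rhs => rw [← MvPolynomial.sum_homogeneousComponent f]
    have hsub : Finset.range (f.totalDegree + 1) ⊆ Finset.range (n + 1) :=
      Finset.range_subset_range.mpr (by omega)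
    exact (Finset.sum_subset hsub
      (fun m _ hm => homogeneousComponent_eq_zero m f
        (by simp only [Finset.mem_range, not_lt] at hm; omega))).symm
  have hc : ∀ m : Fin (n + 1), ∃ c : Fin ((n + d - 1).choose n) → ℝ,
      ∑ j, c j • (RidgeAux.ell (ξ j)) ^ (m : ℕ) = homogeneousComponent (m : ℕ) f := by
    intro m
    have hmem : homogeneousComponent (m : ℕ) f ∈ homogeneousSubmodule (Fin d) ℝ (m : ℕ) :=
      homogeneousComponent_isHomogeneous (m : ℕ) f
    exact (Submodule.mem_span_range_iff_exists_fun ℝ).mp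
      (hspan (m : ℕ) (Nat.lt_succ_iff.mp m.2) hmem)
  choose c hcfun using hc
  refine ⟨fun j => ∑ m : Fin (n + 1),
    Polynomial.C (c m j * (Nrm j) ^ (m : ℕ)) * Polynomial.X ^ (m : ℕ), ?_⟩
  intro x
  set xf : Fin d → ℝ := fun i => x i with hxf
  have hLHS : eval xf f
      = ∑ m : Fin (n + 1), ∑ j, c m j * (eval xf (RidgeAux.ell (ξ j))) ^ (m : ℕ) := by
    conv_lhs => rw [← hcomp]
    rw [map_sum, ← Fin.sum_univ_eq_sum_range (fun m => eval xf (homogeneousComponent m f))]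
    refine Finset.sum_congr rfl (fun m _ => ?_)
    rw [← hcfun m, map_sum]
    refine Finset.sum_congr rfl (fun j _ => ?_)
    rw [MvPolynomial.smul_eval, map_pow]
  have hell : ∀ j, eval xf (RidgeAux.ell (ξ j)) = Nrm j * ∑ i, x i * u j i := by
    intro j
    rw [RidgeAux.eval_ell, Finset.mul_sum]
    refine Finset.sum_congr rfl (fun i _ => ?_)
    rw [hscale j i]
    ring
  rw [hLHS, Finset.sum_comm]
  refine Finset.sum_congr rfl (fun j _ => ?_)
  rw [Polynomial.eval_finset_sum]
  refine Finset.sum_congr rfl (fun m _ => ?_)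
  rw [Polynomial.eval_mul, Polynomial.eval_C, Polynomial.eval_pow, Polynomial.eval_X,
    hell j, mul_pow]
  ring
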